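/- Let A(q) be an arbitrary formal power series over a commutative ring with A(0)=0 (or more generally any family of terms indexed by positive integers), and set B(q) = ∏_{m=1}^∞ (1 + A(q^m)). Then ∑_{K} gcd(K)^4 ∏_{k ∈ K} A(q^k) = ∑_{d=1}^∞ J_4(d) (B(q^d) − 1), where K runs over all nonempty finite subsets of the positive integers and J_4 is the fourth Jordan totient function J_4(d) = d^4 ∏_{p | d} (1 − p^{-4}). -/

import Mathlib

/-- The fourth Jordan totient function: the number of 4-tuples `(c₁,c₂,c₃,c₄)` with
`1 ≤ cᵢ ≤ d` and `gcd(c₁,c₂,c₃,c₄,d) = 1`.  (This equals `d^4 * ∏_{p ∣ d} (1 - p^{-4})`.) -/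
def jordanTotient4 (d : ℕ) : ℕ :=
  ((Finset.Icc 1 d ×ˢ Finset.Icc 1 d ×ˢ Finset.Icc 1 d ×ˢ Finset.Icc 1 d).filter
    fun c => Nat.gcd c.1 (Nat.gcd c.2.1 (Nat.gcd c.2.2.1 (Nat.gcd c.2.2.2 d))) = 1).card

/-- Let `a k` (for `k ≥ 1`) be a family of formal power series with `a k` of order at least `k`
(in the motivating case `a k = A(q^k)` for a power series `A` with `A(0) = 0`), and let
`B_d := ∏_{m ≥ 1} (1 + a (d*m))`.  Then
`∑_{K ≠ ∅ finite} gcd(K)^4 ∏_{k ∈ K} a k = ∑_{d ≥ 1} J₄(d) (B_d - 1)`,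
stated coefficientwise: for the coefficient of `q^n`, only `K ⊆ {1,…,n}`, `d ≤ n` and the
factors with `m ≤ n` contribute. -/
private def gg (c : ℕ × ℕ × ℕ × ℕ) (g : ℕ) : ℕ :=
  Nat.gcd c.1 (Nat.gcd c.2.1 (Nat.gcd c.2.2.1 (Nat.gcd c.2.2.2 g)))

private lemma gg_dvd_last (c : ℕ × ℕ × ℕ × ℕ) (g : ℕ) : gg c g ∣ g :=
  (Nat.gcd_dvd_right _ _).trans (Nat.gcd_dvd_right _ _) |>.trans
    ((Nat.gcd_dvd_right _ _).trans (Nat.gcd_dvd_right _ _)) |>.trans dvd_rfl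

private lemma gg_dvd₁ (c : ℕ × ℕ × ℕ × ℕ) (g : ℕ) : gg c g ∣ c.1 := Nat.gcd_dvd_left _ _
private lemma gg_dvd₂ (c : ℕ × ℕ × ℕ × ℕ) (g : ℕ) : gg c g ∣ c.2.1 :=
  (Nat.gcd_dvd_right _ _).trans (Nat.gcd_dvd_left _ _)
private lemma gg_dvd₃ (c : ℕ × ℕ × ℕ × ℕ) (g : ℕ) : gg c g ∣ c.2.2.1 :=
  ((Nat.gcd_dvd_right _ _).trans (Nat.gcd_dvd_right _ _)).trans (Nat.gcd_dvd_left _ _)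
private lemma gg_dvd₄ (c : ℕ × ℕ × ℕ × ℕ) (g : ℕ) : gg c g ∣ c.2.2.2 :=
  ((Nat.gcd_dvd_right _ _).trans (Nat.gcd_dvd_right _ _)).trans
    ((Nat.gcd_dvd_right _ _).trans (Nat.gcd_dvd_left _ _))

private lemma gg_mul (e : ℕ) (c : ℕ × ℕ × ℕ × ℕ) (g : ℕ) :
    gg (e * c.1, e * c.2.1, e * c.2.2.1, e * c.2.2.2) (e * g) = e * gg c g := by
  simp [gg, Nat.gcd_mul_left]

lemma sum_jordanTotient4 {g : ℕ} (hg : 0 < g) :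
    ∑ d ∈ g.divisors, jordanTotient4 d = g ^ 4 := by
  have hcard : g ^ 4 =
      (Finset.Icc 1 g ×ˢ Finset.Icc 1 g ×ˢ Finset.Icc 1 g ×ˢ Finset.Icc 1 g).card := by
    simp [Nat.card_Icc]; ring
  rw [hcard,
    Finset.card_eq_sum_card_fiberwise (f := fun c => g / gg c g) (t := g.divisors)
      (fun c _ => Nat.mem_divisors.2 ⟨Nat.div_dvd_of_dvd (gg_dvd_last c g), hg.ne'⟩)]
  refine Finset.sum_congr rfl fun d hd => ?_
  obtain ⟨hdg, -⟩ := Nat.mem_divisors.1 hd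
  have hd0 : 0 < d := Nat.pos_of_dvd_of_pos hdg hg
  set e := g / d with he
  have heg : e ∣ g := Nat.div_dvd_of_dvd hdg
  have hed : e * d = g := Nat.div_mul_cancel hdg
  have he0 : 0 < e := Nat.pos_of_dvd_of_pos heg hg
  have hge : g / e = d := Nat.div_div_self hdg hg.ne'
  -- fiber condition rewrite
  have hfib : ∀ c : ℕ × ℕ × ℕ × ℕ, (g / gg c g = d) ↔ gg c g = e := by
    intro c
    constructor
    · intro h
      have := Nat.div_div_self (gg_dvd_last c g) hg.ne'
      rw [h] at this; omega
    · intro h; rw [h, hge]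
  unfold jordanTotient4
  refine (Finset.card_bij'
    (fun c _ => (e * c.1, e * c.2.1, e * c.2.2.1, e * c.2.2.2))
    (fun c _ => (c.1 / e, c.2.1 / e, c.2.2.1 / e, c.2.2.2 / e)) ?_ ?_ ?_ ?_)
  · -- jordan → fiber
    rintro ⟨c1, c2, c3, c4⟩ hc
    simp only [Finset.mem_filter, Finset.mem_product, Finset.mem_Icc] at hc
    obtain ⟨⟨⟨h11, h12⟩, ⟨h21, h22⟩, ⟨h31, h32⟩, h41, h42⟩, hgg⟩ := hc
    have key : ∀ x : ℕ, 1 ≤ x → x ≤ d → 1 ≤ e * x ∧ e * x ≤ g := fun x h1 h2 =>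
      ⟨Nat.one_le_iff_ne_zero.2 (by positivity), hed ▸ Nat.mul_le_mul_left e h2⟩
    simp only [Finset.mem_filter, Finset.mem_product, Finset.mem_Icc]
    refine ⟨⟨key c1 h11 h12, key c2 h21 h22, key c3 h31 h32, key c4 h41 h42⟩, ?_⟩
    show g / gg (e * c1, e * c2, e * c3, e * c4) g = d
    rw [hfib]
    have := gg_mul e (c1, c2, c3, c4) d
    simp only at this
    rw [hed] at this
    rw [this, show gg (c1, c2, c3, c4) d = 1 from hgg, mul_one]
  · -- fiber → jordan
    rintro ⟨c1, c2, c3, c4⟩ hc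
    simp only [Finset.mem_filter, Finset.mem_product, Finset.mem_Icc] at hc
    obtain ⟨⟨⟨h11, h12⟩, ⟨h21, h22⟩, ⟨h31, h32⟩, h41, h42⟩, hgg⟩ := hc
    rw [hfib] at hgg
    have d1 := (hgg ▸ gg_dvd₁ (c1,c2,c3,c4) g : e ∣ c1)
    have d2 := (hgg ▸ gg_dvd₂ (c1,c2,c3,c4) g : e ∣ c2)
    have d3 := (hgg ▸ gg_dvd₃ (c1,c2,c3,c4) g : e ∣ c3)
    have d4 := (hgg ▸ gg_dvd₄ (c1,c2,c3,c4) g : e ∣ c4)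
    have key : ∀ x : ℕ, e ∣ x → 1 ≤ x → x ≤ g → 1 ≤ x / e ∧ x / e ≤ d := by
      intro x hx h1 h2
      refine ⟨Nat.one_le_div_iff he0 |>.2 (Nat.le_of_dvd h1 hx), ?_⟩
      rw [← hge]; exact Nat.div_le_div_right h2
    simp only [Finset.mem_filter, Finset.mem_product, Finset.mem_Icc]
    refine ⟨⟨key c1 d1 h11 h12, key c2 d2 h21 h22, key c3 d3 h31 h32, key c4 d4 h41 h42⟩, ?_⟩
    have h2 : gg (e * (c1 / e), e * (c2 / e), e * (c3 / e), e * (c4 / e)) (e * d)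
        = e * gg (c1 / e, c2 / e, c3 / e, c4 / e) d := gg_mul e (c1 / e, c2 / e, c3 / e, c4 / e) d
    rw [Nat.mul_div_cancel' d1, Nat.mul_div_cancel' d2, Nat.mul_div_cancel' d3,
      Nat.mul_div_cancel' d4, hed, hgg] at h2
    exact (Nat.eq_of_mul_eq_mul_left he0 (by simpa [gg] using h2)).symm
  · rintro ⟨c1, c2, c3, c4⟩ hc
    simp [Nat.mul_div_cancel_left _ he0]
  · rintro ⟨c1, c2, c3, c4⟩ hc
    simp only [Finset.mem_filter, Finset.mem_product, Finset.mem_Icc] at hc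
    obtain ⟨-, hgg⟩ := hc
    rw [hfib] at hgg
    have d1 := (hgg ▸ gg_dvd₁ (c1,c2,c3,c4) g : e ∣ c1)
    have d2 := (hgg ▸ gg_dvd₂ (c1,c2,c3,c4) g : e ∣ c2)
    have d3 := (hgg ▸ gg_dvd₃ (c1,c2,c3,c4) g : e ∣ c3)
    have d4 := (hgg ▸ gg_dvd₄ (c1,c2,c3,c4) g : e ∣ c4)
    simp [Nat.mul_div_cancel' d1, Nat.mul_div_cancel' d2, Nat.mul_div_cancel' d3,
      Nat.mul_div_cancel' d4]

private lemma coeff_prod_eq_zero {R : Type*} [CommRing R] {b : ℕ → PowerSeries R}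
    {S : Finset ℕ} {m : ℕ} (hm : m ∈ S) {n : ℕ}
    (h : ∀ j ≤ n, PowerSeries.coeff j (b m) = 0) :
    PowerSeries.coeff n (∏ i ∈ S, b i) = 0 := by
  rw [← Finset.mul_prod_erase S b hm, PowerSeries.coeff_mul]
  refine Finset.sum_eq_zero fun p hp => ?_
  rw [h p.1 (by have := Finset.HasAntidiagonal.mem_antidiagonal.1 hp; omega), zero_mul]

private lemma coeff_prod_one_add {R : Type*} [CommRing R] (f : ℕ → PowerSeries R)
    (s : Finset ℕ) {n : ℕ} (hn : 0 < n) :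
    PowerSeries.coeff n ((∏ m ∈ s, (1 + f m)) - 1)
      = ∑ S ∈ s.powerset.filter (fun S => S.Nonempty),
          PowerSeries.coeff n (∏ m ∈ S, f m) := by
  have h1 : ∏ m ∈ s, (1 + f m) = ∑ t ∈ s.powerset, ∏ m ∈ t, f m := by
    calc ∏ m ∈ s, (1 + f m) = ∏ m ∈ s, (f m + 1) := by simp [add_comm]
      _ = ∑ t ∈ s.powerset, (∏ m ∈ t, f m) * ∏ m ∈ s \ t, 1 := Finset.prod_add _ _ s
      _ = ∑ t ∈ s.powerset, ∏ m ∈ t, f m := by simp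
  rw [h1, map_sub, map_sum,
    ← Finset.sum_filter_add_sum_filter_not s.powerset (fun S => S.Nonempty)]
  have h2 : s.powerset.filter (fun S => ¬ S.Nonempty) = {∅} := by
    ext t
    simp [Finset.not_nonempty_iff_eq_empty]
    intro h; subst h; exact Finset.empty_subset s
  rw [h2]
  simp [PowerSeries.coeff_one, hn.ne']

private lemma sum_reindex {R : Type*} [CommRing R] (a : ℕ → PowerSeries R) (n d : ℕ)
    (hd : 0 < d) :
    ∑ S ∈ ((Finset.Icc 1 n).powerset.filter (fun S => S.Nonempty)).filter
        (fun S => ∀ m ∈ S, d * m ≤ n),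
      PowerSeries.coeff n (∏ m ∈ S, a (d * m))
    = ∑ K ∈ ((Finset.Icc 1 n).powerset.filter (fun K => K.Nonempty)).filter
        (fun K => d ∣ K.gcd id),
      PowerSeries.coeff n (∏ k ∈ K, a k) := by
  refine Finset.sum_nbij' (fun S => S.image (fun m => d * m))
    (fun K => K.image (fun k => k / d)) ?_ ?_ ?_ ?_ ?_
  · intro S hS
    simp only [Finset.mem_filter, Finset.mem_powerset] at hS ⊢
    obtain ⟨⟨hsub, hne⟩, hQ⟩ := hS
    refine ⟨⟨?_, hne.image _⟩, ?_⟩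
    · intro x hx
      obtain ⟨m, hm, rfl⟩ := Finset.mem_image.1 hx
      have h1 := Finset.mem_Icc.1 (hsub hm)
      exact Finset.mem_Icc.2 ⟨Nat.mul_pos hd h1.1, hQ m hm⟩
    · exact Finset.dvd_gcd fun k hk => by
        obtain ⟨m, hm, rfl⟩ := Finset.mem_image.1 hk
        exact dvd_mul_right d m
  · intro K hK
    simp only [Finset.mem_filter, Finset.mem_powerset] at hK ⊢
    obtain ⟨⟨hsub, hne⟩, hdvd⟩ := hK
    have hdk : ∀ k ∈ K, d ∣ k := fun k hk => hdvd.trans (Finset.gcd_dvd hk)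
    refine ⟨⟨?_, hne.image _⟩, ?_⟩
    · intro x hx
      obtain ⟨k, hk, rfl⟩ := Finset.mem_image.1 hx
      have h1 := Finset.mem_Icc.1 (hsub hk)
      exact Finset.mem_Icc.2 ⟨(Nat.one_le_div_iff hd).2 (Nat.le_of_dvd h1.1 (hdk k hk)),
        (Nat.div_le_self k d).trans h1.2⟩
    · intro m hm
      obtain ⟨k, hk, rfl⟩ := Finset.mem_image.1 hm
      rw [Nat.mul_div_cancel' (hdk k hk)]
      exact (Finset.mem_Icc.1 (hsub hk)).2
  · intro S hS
    rw [Finset.image_image]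
    have : ∀ x ∈ S, ((fun k => k / d) ∘ fun m => d * m) x = id x := fun x _ =>
      Nat.mul_div_cancel_left x hd
    rw [Finset.image_congr fun x hx => this x hx, Finset.image_id]
  · intro K hK
    simp only [Finset.mem_filter, Finset.mem_powerset] at hK
    obtain ⟨⟨hsub, hne⟩, hdvd⟩ := hK
    have hdk : ∀ k ∈ K, d ∣ k := fun k hk => hdvd.trans (Finset.gcd_dvd hk)
    rw [Finset.image_image]
    have : ∀ x ∈ K, ((fun m => d * m) ∘ fun k => k / d) x = id x := fun x hx =>
      Nat.mul_div_cancel' (hdk x hx)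
    rw [Finset.image_congr fun x hx => this x hx, Finset.image_id]
  · intro S hS
    congr 1
    rw [Finset.prod_image]
    intro x _ y _ h
    exact Nat.eq_of_mul_eq_mul_left hd h

private lemma divisors_eq_filter {g n : ℕ} (h1 : 1 ≤ g) (h2 : g ≤ n) :
    g.divisors = (Finset.Icc 1 n).filter (· ∣ g) := by
  ext d
  simp only [Nat.mem_divisors, Finset.mem_filter, Finset.mem_Icc]
  constructor
  · rintro ⟨hd, -⟩
    exact ⟨⟨Nat.pos_of_dvd_of_pos hd h1, (Nat.le_of_dvd h1 hd).trans h2⟩, hd⟩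
  · rintro ⟨⟨h3, -⟩, hd⟩
    exact ⟨hd, by omega⟩

theorem jordan_totient_generating_identity {R : Type*} [CommRing R]
    (a : ℕ → PowerSeries R)
    (ha : ∀ k j : ℕ, j < k → PowerSeries.coeff j (a k) = 0) (n : ℕ) :
    ∑ K ∈ (Finset.Icc 1 n).powerset.filter (fun K => K.Nonempty),
      ((K.gcd id : ℕ) : R) ^ 4 * PowerSeries.coeff n (∏ k ∈ K, a k)
      = ∑ d ∈ Finset.Icc 1 n,
          (jordanTotient4 d : R) *
            PowerSeries.coeff n ((∏ m ∈ Finset.Icc 1 n, (1 + a (d * m))) - 1) := by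
  rcases Nat.eq_zero_or_pos n with rfl | hn
  · simp [Finset.filter_singleton]
  have hRHS : ∀ d ∈ Finset.Icc 1 n,
      PowerSeries.coeff n ((∏ m ∈ Finset.Icc 1 n, (1 + a (d * m))) - 1)
      = ∑ K ∈ ((Finset.Icc 1 n).powerset.filter (fun K => K.Nonempty)).filter
          (fun K => d ∣ K.gcd id),
        PowerSeries.coeff n (∏ k ∈ K, a k) := by
    intro d hd
    have hd0 : 0 < d := (Finset.mem_Icc.1 hd).1
    rw [coeff_prod_one_add _ _ hn, ← sum_reindex a n d hd0]
    refine (Finset.sum_filter_of_ne ?_).symm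
    intro S hS hne
    by_contra h
    push_neg at h
    obtain ⟨m, hmS, hmn⟩ := h
    exact hne (coeff_prod_eq_zero hmS fun j hj => ha (d * m) j (by omega))
  calc
    ∑ K ∈ (Finset.Icc 1 n).powerset.filter (fun K => K.Nonempty),
        ((K.gcd id : ℕ) : R) ^ 4 * PowerSeries.coeff n (∏ k ∈ K, a k)
      = ∑ K ∈ (Finset.Icc 1 n).powerset.filter (fun K => K.Nonempty),
          ∑ d ∈ Finset.Icc 1 n,
            (if d ∣ K.gcd id then
              (jordanTotient4 d : R) * PowerSeries.coeff n (∏ k ∈ K, a k) else 0) := by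
        refine Finset.sum_congr rfl fun K hK => ?_
        simp only [Finset.mem_filter, Finset.mem_powerset] at hK
        obtain ⟨hsub, hne⟩ := hK
        obtain ⟨k, hk⟩ := hne
        have hk' := Finset.mem_Icc.1 (hsub hk)
        have hgk : K.gcd id ∣ k := Finset.gcd_dvd hk
        have hg1 : 1 ≤ K.gcd id := Nat.pos_of_dvd_of_pos hgk hk'.1
        have hgn : K.gcd id ≤ n := (Nat.le_of_dvd hk'.1 hgk).trans hk'.2
        rw [show ((K.gcd id : ℕ) : R) ^ 4 = ((K.gcd id ^ 4 : ℕ) : R) by push_cast; ring,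
          ← sum_jordanTotient4 hg1, divisors_eq_filter hg1 hgn, Nat.cast_sum,
          Finset.sum_mul, Finset.sum_filter]
    _ = ∑ d ∈ Finset.Icc 1 n,
          ∑ K ∈ (Finset.Icc 1 n).powerset.filter (fun K => K.Nonempty),
            (if d ∣ K.gcd id then
              (jordanTotient4 d : R) * PowerSeries.coeff n (∏ k ∈ K, a k) else 0) :=
        Finset.sum_comm
    _ = ∑ d ∈ Finset.Icc 1 n,
          (jordanTotient4 d : R) *
            PowerSeries.coeff n ((∏ m ∈ Finset.Icc 1 n, (1 + a (d * m))) - 1) := by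
        refine Finset.sum_congr rfl fun d hd => ?_
        rw [hRHS d hd, Finset.mul_sum, ← Finset.sum_filter]
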